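/- Let w : ℤ × ℤ → ℂ and z : ℤ × ℤ → ℂ be nowhere-zero/arbitrary functions related by the Miura-type transformation z(n+1,m) - z(n,m) = 1/(α·w(n,m)·w(n+1,m)) and z(n,m+1) - z(n,m) = 1/(β·w(n,m)·w(n,m+1)) for all n, m, where α, β ∈ ℂ \ {0} and w is nowhere zero. If w satisfies the lpmKdV equation α·(w·ŵ - w̃·ŵ̃) = β·(w·w̃ - ŵ·ŵ̃) at each point, then the two expressions for z(n+1,m+1) - z(n,m) obtained by the two paths agree (the transformation is compatible), and z satisfies the lattice Schwarzian KdV equation α²·(ẑ̃ - ẑ)·(z̃ - z) = β²·(ẑ̃ - z̃)·(ẑ - z). -/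

import Mathlib

/-- the Miura-type transformation
`z̃ - z = 1/(α·w·w̃)`, `ẑ - z = 1/(β·w·ŵ)` linking the lpmKdV equation to the
lattice Schwarzian KdV equation: if `w` solves lpmKdV, then the two expressions
for `ẑ̃ - z` agree (compatibility) and `z` solves the lSKdV equation with
parameters `a = α²`, `b = β²`. -/
theorem miura_lpmKdV_to_lSKdV
    (w z : ℤ → ℤ → ℂ) (α β : ℂ)
    (hw : ∀ n m, w n m ≠ 0) (hα : α ≠ 0) (hβ : β ≠ 0)
    (hm1 : ∀ n m, z (n + 1) m - z n m = 1 / (α * w n m * w (n + 1) m))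
    (hm2 : ∀ n m, z n (m + 1) - z n m = 1 / (β * w n m * w n (m + 1)))
    (hlpm : ∀ n m, α * (w n m * w n (m + 1) - w (n + 1) m * w (n + 1) (m + 1))
          = β * (w n m * w (n + 1) m - w n (m + 1) * w (n + 1) (m + 1))) :
    (∀ n m, 1 / (α * w n (m + 1) * w (n + 1) (m + 1)) + 1 / (β * w n m * w n (m + 1))
          = 1 / (β * w (n + 1) m * w (n + 1) (m + 1)) + 1 / (α * w n m * w (n + 1) m)) ∧
    (∀ n m, α ^ 2 * (z (n + 1) (m + 1) - z n (m + 1)) * (z (n + 1) m - z n m)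
          = β ^ 2 * (z (n + 1) (m + 1) - z (n + 1) m) * (z n (m + 1) - z n m)) := by
  constructor
  · intro n m
    have h := hlpm n m
    have h00 := hw n m; have h10 := hw (n+1) m; have h01 := hw n (m+1); have h11 := hw (n+1) (m+1)
    field_simp
    linear_combination (-1 : ℂ) * h
  · intro n m
    have e1 := hm1 n (m+1)
    have e2 := hm1 n m
    have e3 := hm2 (n+1) m
    have e4 := hm2 n m
    rw [e1, e2, e3, e4]
    have h00 := hw n m; have h10 := hw (n+1) m; have h01 := hw n (m+1); have h11 := hw (n+1) (m+1)
    field_simp
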